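/- Let E be a finite-dimensional real inner product space, f : E → ℝ convex and twice continuously differentiable with β₂-Lipschitz Hessian, R : E → ℝ convex, F = f + R, and x* a minimizer of F with F* = F(x*). Fix x̄ ∈ E and suppose 0 < α ≤ β̃ satisfy α‖h‖² ≤ ⟨∇²f(x̄)h, h⟩ ≤ β̃‖h‖² for all h ∈ E. Define Q(w) = ⟨∇f(x̄), w − x̄⟩ + (1/2)⟨∇²f(x̄)(w − x̄), w − x̄⟩, φ = Q + R, and for y ∈ E and λ > 0 define ψ_{y,λ}(u) = ⟨∇Q(y), u − y⟩ + (λβ̃/2)‖u − y‖² + R(u). Let λ = α/β̃ and let (y_i)_{i≥1} be a sequence with y₁ = x̄ such that for each i ≥ 1 there is w_i with ψ_{y_i,λ}(w_i) ≤ min{ψ_{y_i,λ}(x*), ψ_{y_i,λ}(y_i)} and y_{i+1} = (1 − λ)y_i + λ·w_i. Then for all i ≥ 1: φ(y_i) − φ(x*) ≤ (F(x̄) − F* + (β₂/6)·‖x̄ − x*‖³)·(1 − α/β̃)^{i−1}. -/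

import Mathlib

open RealInnerProductSpace
open Set

lemma aux_symm {E : Type*} [NormedAddCommGroup E] [InnerProductSpace ℝ E] [CompleteSpace E]
    (f : E → ℝ) (hf2 : ContDiff ℝ 2 f) (xb : E) (u v : E) :
    ⟪(fderiv ℝ (gradient f) xb) u, v⟫ = ⟪(fderiv ℝ (gradient f) xb) v, u⟫ := by
  have hd : Differentiable ℝ f := hf2.differentiable two_ne_zero
  have h1 : ContDiff ℝ 1 (fderiv ℝ f) := hf2.fderiv_right (le_refl _)
  have hgr : gradient f = ⇑(InnerProductSpace.toDual ℝ E).symm ∘ (fderiv ℝ f) := rfl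
  have hcomp := LinearIsometryEquiv.comp_fderiv (𝕜 := ℝ)
    (iso := (InnerProductSpace.toDual ℝ E).symm) (f := fderiv ℝ f) (x := xb)
  have hsym : ∀ a b : E, fderiv ℝ (fderiv ℝ f) xb a b = fderiv ℝ (fderiv ℝ f) xb b a :=
    fun a b => second_derivative_symmetric (fun y => (hd y).hasFDerivAt)
      ((h1.differentiable one_ne_zero xb).hasFDerivAt) a b
  rw [hgr, hcomp]
  show ⟪(InnerProductSpace.toDual ℝ E).symm (fderiv ℝ (fderiv ℝ f) xb u), v⟫
      = ⟪(InnerProductSpace.toDual ℝ E).symm (fderiv ℝ (fderiv ℝ f) xb v), u⟫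
  rw [InnerProductSpace.toDual_symm_apply, InnerProductSpace.toDual_symm_apply]
  exact hsym u v

lemma aux_grad_diff {E : Type*} [NormedAddCommGroup E] [InnerProductSpace ℝ E] [CompleteSpace E]
    (f : E → ℝ) (hf2 : ContDiff ℝ 2 f) : Differentiable ℝ (gradient f) := by
  have h1 : ContDiff ℝ 1 (fderiv ℝ f) := hf2.fderiv_right (le_refl _)
  have hgr : gradient f = ⇑(InnerProductSpace.toDual ℝ E).symm ∘ (fderiv ℝ f) := rfl
  rw [hgr]
  exact (InnerProductSpace.toDual ℝ E).symm.differentiable.comp (h1.differentiable one_ne_zero)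

lemma aux_taylor {E : Type*} [NormedAddCommGroup E] [InnerProductSpace ℝ E] [CompleteSpace E]
    (f : E → ℝ) (hf2 : ContDiff ℝ 2 f) (β₂ : ℝ)
    (hHessLip : ∀ u v : E,
      ‖fderiv ℝ (gradient f) u - fderiv ℝ (gradient f) v‖ ≤ β₂ * ‖u - v‖)
    (xb w : E) :
    |f w - f xb - (⟪gradient f xb, w - xb⟫
      + (1 / 2) * ⟪(fderiv ℝ (gradient f) xb) (w - xb), w - xb⟫)|
      ≤ β₂ / 6 * ‖w - xb‖ ^ 3 := by
  have hd : Differentiable ℝ f := hf2.differentiable two_ne_zero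
  have hgd : Differentiable ℝ (gradient f) := aux_grad_diff f hf2
  set d : E := w - xb with hdd
  set H : E →L[ℝ] E := fderiv ℝ (gradient f) xb with hH
  set g : E := gradient f xb with hg
  set γ : ℝ → E := fun t => xb + t • d with hγdef
  have hγ : ∀ t : ℝ, HasDerivAt γ d t := by
    intro t
    have : HasDerivAt (fun s : ℝ => s • d) ((1:ℝ) • d) t := (hasDerivAt_id t).smul_const d
    have h := this.const_add xb; rw [one_smul] at h; exact h
  have hγ0 : γ 0 = xb := by simp [hγdef]
  have hγ1 : γ 1 = w := by simp [hγdef, hdd]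
  -- Step 1 : bound on G t = gradient f (γ t) - g - t • H d
  set G : ℝ → E := fun t => gradient f (γ t) - g - t • H d with hGdef
  have hG' : ∀ t : ℝ, HasDerivAt G ((fderiv ℝ (gradient f) (γ t)) d - H d) t := by
    intro t
    have h1 : HasDerivAt (fun t => gradient f (γ t)) ((fderiv ℝ (gradient f) (γ t)) d) t :=
      (hgd (γ t)).hasFDerivAt.comp_hasDerivAt t (hγ t)
    have h2 : HasDerivAt (fun s : ℝ => s • H d) ((1:ℝ) • H d) t := (hasDerivAt_id t).smul_const _
    have h := (h1.sub_const g).sub h2; rw [one_smul] at h; exact h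
  have hGbound : ∀ t ∈ Icc (0:ℝ) 1, ‖G t‖ ≤ β₂ * ‖d‖ ^ 2 / 2 * t ^ 2 := by
    have hc : ContinuousOn G (Icc (0:ℝ) 1) := fun t _ => (hG' t).continuousAt.continuousWithinAt
    have hdw : ∀ t ∈ Ico (0:ℝ) 1,
        HasDerivWithinAt G ((fderiv ℝ (gradient f) (γ t)) d - H d) (Ici t) t :=
      fun t _ => (hG' t).hasDerivWithinAt
    have ha : ‖G 0‖ ≤ β₂ * ‖d‖ ^ 2 / 2 * (0:ℝ) ^ 2 := by simp [hGdef, hγ0, hg]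
    have hB : ∀ t : ℝ, HasDerivAt (fun t : ℝ => β₂ * ‖d‖ ^ 2 / 2 * t ^ 2) (β₂ * ‖d‖ ^ 2 * t) t := by
      intro t
      have : HasDerivAt (fun t : ℝ => β₂ * ‖d‖ ^ 2 / 2 * t ^ 2)
          (β₂ * ‖d‖ ^ 2 / 2 * (2 * t ^ 1)) t := (hasDerivAt_pow 2 t).const_mul _
      convert this using 1; ring
    have hbd : ∀ t ∈ Ico (0:ℝ) 1,
        ‖(fderiv ℝ (gradient f) (γ t)) d - H d‖ ≤ β₂ * ‖d‖ ^ 2 * t := by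
      intro t ht
      have h1 : (fderiv ℝ (gradient f) (γ t)) d - H d
          = (fderiv ℝ (gradient f) (γ t) - H) d := by simp
      rw [h1]
      calc ‖(fderiv ℝ (gradient f) (γ t) - H) d‖
          ≤ ‖fderiv ℝ (gradient f) (γ t) - H‖ * ‖d‖ := ContinuousLinearMap.le_opNorm _ _
        _ ≤ (β₂ * ‖γ t - xb‖) * ‖d‖ :=
            mul_le_mul_of_nonneg_right (hHessLip (γ t) xb) (norm_nonneg d)
        _ = β₂ * ‖d‖ ^ 2 * t := by
            have h2 : γ t - xb = t • d := by simp [hγdef]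
            rw [h2, norm_smul, Real.norm_eq_abs, abs_of_nonneg ht.1]
            ring
    exact fun t ht =>
      image_norm_le_of_norm_deriv_right_le_deriv_boundary hc hdw ha hB hbd ht
  -- Step 2 : scalar bound
  have hginner : ∀ x v : E, ⟪gradient f x, v⟫ = fderiv ℝ f x v := by
    intro x v
    exact InnerProductSpace.toDual_symm_apply
  set h : ℝ → ℝ := fun t => f (γ t) - f xb - t * ⟪g, d⟫ - t ^ 2 * (⟪H d, d⟫ / 2) with hhdef
  have hh' : ∀ t : ℝ, HasDerivAt h (⟪G t, d⟫) t := by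
    intro t
    have h1 : HasDerivAt (fun t => f (γ t)) (fderiv ℝ f (γ t) d) t :=
      (hd (γ t)).hasFDerivAt.comp_hasDerivAt t (hγ t)
    have h2 : HasDerivAt (fun s : ℝ => s * ⟪g, d⟫) ⟪g, d⟫ t := by
      simpa using (hasDerivAt_id t).mul_const (⟪g, d⟫)
    have h3 : HasDerivAt (fun s : ℝ => s ^ 2 * (⟪H d, d⟫ / 2)) (2 * t ^ 1 * (⟪H d, d⟫ / 2)) t :=
      (hasDerivAt_pow 2 t).mul_const _
    have h4 := ((h1.sub_const (f xb)).sub h2).sub h3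
    refine h4.congr_deriv ?_
    symm
    rw [hGdef]
    simp only [inner_sub_left, inner_smul_left]
    rw [hginner]
    simp only [RCLike.star_def, conj_trivial]
    ring
  have hhbound : ∀ t ∈ Icc (0:ℝ) 1, ‖h t‖ ≤ β₂ * ‖d‖ ^ 3 / 6 * t ^ 3 := by
    have hc : ContinuousOn h (Icc (0:ℝ) 1) := fun t _ => (hh' t).continuousAt.continuousWithinAt
    have hdw : ∀ t ∈ Ico (0:ℝ) 1, HasDerivWithinAt h (⟪G t, d⟫) (Ici t) t :=
      fun t _ => (hh' t).hasDerivWithinAt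
    have ha : ‖h 0‖ ≤ β₂ * ‖d‖ ^ 3 / 6 * (0:ℝ) ^ 3 := by simp [hhdef, hγ0]
    have hB : ∀ t : ℝ, HasDerivAt (fun t : ℝ => β₂ * ‖d‖ ^ 3 / 6 * t ^ 3)
        (β₂ * ‖d‖ ^ 2 / 2 * t ^ 2 * ‖d‖) t := by
      intro t
      have : HasDerivAt (fun t : ℝ => β₂ * ‖d‖ ^ 3 / 6 * t ^ 3)
          (β₂ * ‖d‖ ^ 3 / 6 * (3 * t ^ 2)) t := (hasDerivAt_pow 3 t).const_mul _
      convert this using 1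
      rw [pow_succ ‖d‖ 2]
      ring
    have hbd : ∀ t ∈ Ico (0:ℝ) 1, ‖⟪G t, d⟫‖ ≤ β₂ * ‖d‖ ^ 2 / 2 * t ^ 2 * ‖d‖ := by
      intro t ht
      calc ‖⟪G t, d⟫‖ ≤ ‖G t‖ * ‖d‖ := norm_inner_le_norm _ _
        _ ≤ β₂ * ‖d‖ ^ 2 / 2 * t ^ 2 * ‖d‖ := by
            gcongr
            exact hGbound t ⟨ht.1, le_of_lt ht.2⟩
    exact fun t ht =>
      image_norm_le_of_norm_deriv_right_le_deriv_boundary hc hdw ha hB hbd ht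
  have := hhbound 1 ⟨zero_le_one, le_refl 1⟩
  rw [hhdef] at this
  simp only [one_pow, one_mul, mul_one, hγ1, Real.norm_eq_abs] at this
  calc |f w - f xb - (⟪g, d⟫ + 1 / 2 * ⟪H d, d⟫)|
      = |f w - f xb - ⟪g, d⟫ - ⟪H d, d⟫ / 2| := by ring_nf
    _ ≤ β₂ * ‖d‖ ^ 3 / 6 := this
    _ = β₂ / 6 * ‖d‖ ^ 3 := by ring

lemma aux_Qexp {E : Type*} [NormedAddCommGroup E] [InnerProductSpace ℝ E]
    (g : E) (H : E →L[ℝ] E) (hsym : ∀ u v : E, ⟪H u, v⟫ = ⟪H v, u⟫) (xb : E) (Q : E → ℝ)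
    (hQ : ∀ w, Q w = ⟪g, w - xb⟫ + (1 / 2) * ⟪H (w - xb), w - xb⟫) (y u : E) :
    Q u = Q y + ⟪g + H (y - xb), u - y⟫ + (1 / 2) * ⟪H (u - y), u - y⟫ := by
  have h1 : u - xb = (y - xb) + (u - y) := by abel
  rw [hQ u, hQ y, h1]
  simp only [map_add, inner_add_left, inner_add_right]
  rw [hsym (u - y) (y - xb)]
  ring

lemma aux_gradQ {E : Type*} [NormedAddCommGroup E] [InnerProductSpace ℝ E] [CompleteSpace E]
    (g : E) (H : E →L[ℝ] E) (hsym : ∀ u v : E, ⟪H u, v⟫ = ⟪H v, u⟫) (xb : E) (Q : E → ℝ)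
    (hQ : ∀ w, Q w = ⟪g, w - xb⟫ + (1 / 2) * ⟪H (w - xb), w - xb⟫) (y : E) :
    HasGradientAt Q (g + H (y - xb)) y := by
  rw [hasGradientAt_iff_isLittleO]
  have heq : (fun u => Q u - Q y - ⟪g + H (y - xb), u - y⟫)
      = fun u => (1 / 2) * ⟪H (u - y), u - y⟫ := by
    funext u
    rw [aux_Qexp g H hsym xb Q hQ y u]
    ring
  rw [heq]
  rw [Asymptotics.isLittleO_iff]
  intro c hc
  set ε : ℝ := c / (‖H‖ / 2 + 1) with hε
  have hHpos : (0:ℝ) < ‖H‖ / 2 + 1 := by positivity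
  have hεpos : 0 < ε := div_pos hc hHpos
  have hεc : (‖H‖ / 2 + 1) * ε = c := by
    rw [hε]; field_simp
  have htend : Filter.Tendsto (fun u : E => ‖u - y‖) (nhds y) (nhds 0) :=
    tendsto_norm_sub_self y
  have hev : ∀ᶠ u : E in nhds y, ‖u - y‖ ≤ ε :=
    htend.eventually_le_const hεpos
  filter_upwards [hev] with u hu
  have h2 : |⟪H (u - y), u - y⟫| ≤ ‖H‖ * ‖u - y‖ * ‖u - y‖ := by
    calc |⟪H (u - y), u - y⟫| ≤ ‖H (u - y)‖ * ‖u - y‖ := abs_real_inner_le_norm _ _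
      _ ≤ ‖H‖ * ‖u - y‖ * ‖u - y‖ := by
          apply mul_le_mul_of_nonneg_right (H.le_opNorm _) (norm_nonneg _)
  have h3 : ‖(1 / 2 : ℝ) * ⟪H (u - y), u - y⟫‖ ≤ 1 / 2 * (‖H‖ * ‖u - y‖ * ‖u - y‖) := by
    rw [Real.norm_eq_abs, abs_mul]
    rw [abs_of_nonneg (by norm_num : (0:ℝ) ≤ 1/2)]
    linarith [h2]
  refine h3.trans ?_
  have h4 : ‖H‖ / 2 * ‖u - y‖ ≤ (‖H‖ / 2 + 1) * ε := by
    have := mul_le_mul_of_nonneg_left hu (by positivity : (0:ℝ) ≤ ‖H‖ / 2)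
    nlinarith [hεpos]
  rw [hεc] at h4
  nlinarith [norm_nonneg (u - y)]


/-- Theorem: linear convergence of the first-order weak proximal oracle
scheme for the unregularized quadratic model, under strong convexity:
`φ(y_i) − φ(x*) ≤ (F(x̄) − F* + (β₂/6)·‖x̄ − x*‖³)·(1 − α/β̃)^{i−1}`.
Sequences are indexed from `0` here (the paper's `y₁` is `y 0`). -/
theorem stmt_6
    {E : Type*} [NormedAddCommGroup E] [InnerProductSpace ℝ E] [FiniteDimensional ℝ E]
    (f R : E → ℝ) (β₂ : ℝ)
    (hfconv : ConvexOn ℝ Set.univ f)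
    (hf2 : ContDiff ℝ 2 f)
    (hHessLip : ∀ u v : E,
      ‖fderiv ℝ (gradient f) u - fderiv ℝ (gradient f) v‖ ≤ β₂ * ‖u - v‖)
    (hR : ConvexOn ℝ Set.univ R)
    (F : E → ℝ) (hF : ∀ u, F u = f u + R u)
    (xs : E) (hmin : ∀ u, F xs ≤ F u)
    (xb : E) (α βt : ℝ) (hα : 0 < α) (hαβ : α ≤ βt)
    (hHess : ∀ h : E,
      α * ‖h‖ ^ 2 ≤ ⟪(fderiv ℝ (gradient f) xb) h, h⟫ ∧
      ⟪(fderiv ℝ (gradient f) xb) h, h⟫ ≤ βt * ‖h‖ ^ 2)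
    (Q φ : E → ℝ)
    (hQ : ∀ w, Q w =
      ⟪gradient f xb, w - xb⟫
        + (1 / 2) * ⟪(fderiv ℝ (gradient f) xb) (w - xb), w - xb⟫)
    (hφ : ∀ w, φ w = Q w + R w)
    (ψ : E → E → ℝ) (lam : ℝ) (hlam : lam = α / βt)
    (hψ : ∀ y u, ψ y u =
      ⟪gradient Q y, u - y⟫ + (lam * βt / 2) * ‖u - y‖ ^ 2 + R u)
    (y w : ℕ → E) (hy0 : y 0 = xb)
    (hw : ∀ i, ψ (y i) (w i) ≤ min (ψ (y i) xs) (ψ (y i) (y i)))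
    (hyupd : ∀ i, y (i + 1) = (1 - lam) • y i + lam • w i) :
    ∀ i, φ (y i) - φ xs ≤
      (F xb - F xs + (β₂ / 6) * ‖xb - xs‖ ^ 3) * (1 - α / βt) ^ i := by
  have hβt : 0 < βt := lt_of_lt_of_le hα hαβ
  have hlam1 : lam ≤ 1 := by rw [hlam]; exact (div_le_one hβt).mpr hαβ
  have hlam0 : 0 < lam := by rw [hlam]; positivity
  have hlamβ : lam * βt = α := by rw [hlam]; field_simp
  set g : E := gradient f xb with hg
  set H : E →L[ℝ] E := fderiv ℝ (gradient f) xb with hH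
  have hsym : ∀ u v : E, ⟪H u, v⟫ = ⟪H v, u⟫ := fun u v => aux_symm f hf2 xb u v
  have hQexp : ∀ z u : E, Q u = Q z + ⟪g + H (z - xb), u - z⟫
      + (1 / 2) * ⟪H (u - z), u - z⟫ := aux_Qexp g H hsym xb Q hQ
  have hgradQ : ∀ z : E, gradient Q z = g + H (z - xb) :=
    fun z => (aux_gradQ g H hsym xb Q hQ z).gradient
  -- per-step contraction
  have hstep : ∀ i, φ (y (i + 1)) - φ xs ≤ (1 - lam) * (φ (y i) - φ xs) := by
    intro i
    have hyd : y (i + 1) - y i = lam • (w i - y i) := by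
      rw [hyupd i, sub_smul, one_smul, smul_sub]; abel
    -- expansion of Q at y (i+1)
    have e1 : Q (y (i + 1)) = Q (y i) + lam * ⟪g + H (y i - xb), w i - y i⟫
        + lam ^ 2 * ((1 / 2) * ⟪H (w i - y i), w i - y i⟫) := by
      rw [hQexp (y i) (y (i + 1)), hyd, map_smul, real_inner_smul_right,
        real_inner_smul_left, real_inner_smul_right]
      ring
    have e2 : ⟪H (w i - y i), w i - y i⟫ ≤ βt * ‖w i - y i‖ ^ 2 := (hHess _).2
    have e3 : R (y (i + 1)) ≤ (1 - lam) * R (y i) + lam * R (w i) := by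
      rw [hyupd i]
      exact hR.2 (mem_univ _) (mem_univ _) (by linarith) (le_of_lt hlam0) (by ring)
    have e4 : ψ (y i) (w i) ≤ ψ (y i) xs := le_trans (hw i) (min_le_left _ _)
    have e5 : ψ (y i) xs ≤ φ xs - Q (y i) := by
      rw [hψ, hgradQ, hφ]
      have h6 : α * ‖xs - y i‖ ^ 2 ≤ ⟪H (xs - y i), xs - y i⟫ := (hHess _).1
      have h7 := hQexp (y i) xs
      have h8 : lam * βt / 2 * ‖xs - y i‖ ^ 2 = α / 2 * ‖xs - y i‖ ^ 2 := by
        rw [hlamβ]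
      rw [h8]
      linarith
    have e6 : ψ (y i) (w i) = ⟪g + H (y i - xb), w i - y i⟫
        + lam * βt / 2 * ‖w i - y i‖ ^ 2 + R (w i) := by
      rw [hψ, hgradQ]
    have e7 : φ (y (i + 1)) = Q (y (i + 1)) + R (y (i + 1)) := hφ _
    have e8 : φ (y i) = Q (y i) + R (y i) := hφ _
    -- combine
    have e9 : lam ^ 2 * ((1 / 2) * ⟪H (w i - y i), w i - y i⟫)
        ≤ lam * (lam * βt / 2 * ‖w i - y i‖ ^ 2) := by
      have := mul_le_mul_of_nonneg_left e2 (by positivity : (0:ℝ) ≤ lam ^ 2 / 2)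
      nlinarith
    have e10 : lam * ψ (y i) (w i) ≤ lam * (φ xs - Q (y i)) :=
      mul_le_mul_of_nonneg_left (le_trans e4 e5) (le_of_lt hlam0)
    rw [e6] at e10
    nlinarith [e1, e3, e9, e10]
  -- base bound
  have hbase : φ xb - φ xs ≤ F xb - F xs + β₂ / 6 * ‖xb - xs‖ ^ 3 := by
    have ht := aux_taylor f hf2 β₂ hHessLip xb xs
    have ht2 := (abs_le.1 ht).2
    have hQxs := hQ xs
    have hQxb : Q xb = 0 := by rw [hQ]; simp
    have hnorm : ‖xs - xb‖ = ‖xb - xs‖ := norm_sub_rev _ _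
    rw [hnorm] at ht2
    rw [hφ xb, hφ xs, hF xb, hF xs, hQxb]
    linarith
  have hlamnn : (0:ℝ) ≤ 1 - lam := by linarith
  have hmain : ∀ i, φ (y i) - φ xs ≤ (φ xb - φ xs) * (1 - lam) ^ i := by
    intro i
    induction i with
    | zero => simp [hy0]
    | succ n ih =>
      calc φ (y (n + 1)) - φ xs ≤ (1 - lam) * (φ (y n) - φ xs) := hstep n
        _ ≤ (1 - lam) * ((φ xb - φ xs) * (1 - lam) ^ n) :=
            mul_le_mul_of_nonneg_left ih hlamnn
        _ = (φ xb - φ xs) * (1 - lam) ^ (n + 1) := by ring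
  intro i
  calc φ (y i) - φ xs ≤ (φ xb - φ xs) * (1 - lam) ^ i := hmain i
    _ ≤ (F xb - F xs + β₂ / 6 * ‖xb - xs‖ ^ 3) * (1 - lam) ^ i :=
        mul_le_mul_of_nonneg_right hbase (pow_nonneg hlamnn i)
    _ = (F xb - F xs + β₂ / 6 * ‖xb - xs‖ ^ 3) * (1 - α / βt) ^ i := by rw [hlam]
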